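/- Let B be an f-adic ring, let A be an open subring of B, and let γ : B → B̂ be the canonical map to the completion of B. If every element of B is integral over the subring A, then every element of B̂ is integral over the subring cl(γ(A)), the topological closure of γ(A) in B̂. -/

import Mathlib

open Filter Topology

/-- A subset `S` of a topological ring is bounded if for every neighbourhood `U` of `0`
there is a neighbourhood `V` of `0` with `V · S ⊆ U`. -/
def IsBoundedSubset {A : Type*} [CommRing A] [TopologicalSpace A] (S : Set A) : Prop :=
  ∀ U ∈ 𝓝 (0 : A), ∃ V ∈ 𝓝 (0 : A), ∀ v ∈ V, ∀ s ∈ S, v * s ∈ U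

/-- An element of a topological ring is power-bounded if the set of its powers `aⁿ`, `n ≥ 1`,
is bounded. -/
def IsPowerBounded {A : Type*} [CommRing A] [TopologicalSpace A] (a : A) : Prop :=
  IsBoundedSubset {x : A | ∃ n : ℕ, 1 ≤ n ∧ x = a ^ n}

/-- `A°`, the set of power-bounded elements of a topological ring. -/
def powerBounded (A : Type*) [CommRing A] [TopologicalSpace A] : Set A :=
  {a : A | IsPowerBounded a}

/-- `I₀` is an ideal of definition of the subring `A₀` of the topological ring `A` if it is
finitely generated and its powers form a basis of neighbourhoods of `0` in `A`. -/
def IsIdealOfDefinition {A : Type*} [CommRing A] [TopologicalSpace A]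
    (A₀ : Subring A) (I₀ : Ideal A₀) : Prop :=
  I₀.FG ∧ (𝓝 (0 : A)).HasBasis (fun n : ℕ => 1 ≤ n)
    (fun n => ⇑A₀.subtype '' ((I₀ ^ n : Ideal A₀) : Set A₀))

/-- A ring of definition of a topological ring is an open subring admitting an ideal of
definition. -/
def IsRingOfDefinition {A : Type*} [CommRing A] [TopologicalSpace A] (A₀ : Subring A) : Prop :=
  IsOpen (A₀ : Set A) ∧ ∃ I₀ : Ideal A₀, IsIdealOfDefinition A₀ I₀

/-- A topological commutative ring is f-adic if it admits a ring of definition. -/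
def IsFAdic (A : Type*) [CommRing A] [TopologicalSpace A] : Prop :=
  ∃ A₀ : Subring A, IsRingOfDefinition A₀

/-- A subring `S` of `A` is integrally closed in `A` if every element of `A` integral
over `S` lies in `S`. -/
def IsIntegrallyClosedSubring {A : Type*} [CommRing A] (S : Subring A) : Prop :=
  ∀ x : A, IsIntegral S x → x ∈ S

open Filter Topology

theorem statement10 {B : Type*} [CommRing B] [UniformSpace B] [IsUniformAddGroup B]
    [IsTopologicalRing B] (hB : IsFAdic B)
    (A : Subring B) (hA : IsOpen (A : Set B))
    (γ : B →+* UniformSpace.Completion B)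
    (hγ : γ = UniformSpace.Completion.coeRingHom)
    (hint : ∀ b : B, IsIntegral A b) :
    ∀ β : UniformSpace.Completion B, IsIntegral ((A.map γ).topologicalClosure) β := by
  intro β
  set S := (A.map γ).topologicalClosure with hS
  have hcoe : ∀ x : B, γ x = (x : UniformSpace.Completion B) := by
    intro x; rw [hγ]; rfl
  -- S is a nbhd of 0
  have hnhds : (S : Set (UniformSpace.Completion B)) ∈ 𝓝 (0 : UniformSpace.Completion B) := by
    have h1 : closure ((fun x : B => (x : UniformSpace.Completion B)) '' A) ∈
        𝓝 (((0 : B) : UniformSpace.Completion B)) :=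
      (UniformSpace.Completion.isDenseInducing_coe).closure_image_mem_nhds
        (hA.mem_nhds A.zero_mem)
    rw [UniformSpace.Completion.coe_zero] at h1
    refine Filter.mem_of_superset h1 (closure_mono ?_)
    rintro _ ⟨x, hx, rfl⟩
    exact ⟨x, hx, hcoe x⟩
  obtain ⟨b, hb⟩ : ∃ b : B, γ b - β ∈ S := by
    have hU : {x : UniformSpace.Completion B | x - β ∈ (S : Set _)} ∈ 𝓝 β := by
      have hc : Continuous fun x : UniformSpace.Completion B => x - β :=
        continuous_id.sub continuous_const
      have := hc.continuousAt (x := β)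
      have := this.preimage_mem_nhds (by simpa using hnhds)
      exact this
    have hd : β ∈ closure (Set.range (fun x : B => (x : UniformSpace.Completion B))) := by
      rw [(UniformSpace.Completion.denseRange_coe (α := B)).closure_range]
      trivial
    rcases mem_closure_iff_nhds.1 hd _ hU with ⟨x, hx1, b, rfl⟩
    exact ⟨b, by rwa [hcoe]⟩
  -- f : A →+* S
  have hmemS : ∀ a : A, γ (algebraMap A B a) ∈ S :=
    fun a => Subring.le_topologicalClosure _ ⟨a, a.2, rfl⟩
  let f : A →+* S := (γ.comp (algebraMap A B)).codRestrict S.toSubsemiring hmemS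
  obtain ⟨p, pmonic, peval⟩ := hint b
  have hbint : IsIntegral S (γ b) := by
    refine ⟨p.map f, pmonic.map f, ?_⟩
    rw [Polynomial.eval₂_map]
    have hcomp : (algebraMap S (UniformSpace.Completion B)).comp f
        = γ.comp (algebraMap A B) := by
      ext a; rfl
    rw [hcomp, ← Polynomial.hom_eval₂]
    rw [peval, map_zero]
  have hcint : IsIntegral S (γ b - β) := by
    have : γ b - β = algebraMap S (UniformSpace.Completion B) ⟨γ b - β, hb⟩ := rfl
    rw [this]
    exact isIntegral_algebraMap
  have := hbint.sub hcint
  simpa using this
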